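/- Let 0 < η < π/3, a = e^{-iη}/(2cos η). For each k ≥ 1, define Φ_k(η) = (1-|a|⁴)sin((k-1)η) - |a|³sin((k-2)η) + |a|^k sin η. Then there is a positive constant C (depending on η, k) such that Im((conj(z_{k-1}) - conj(z_k))·(w₁ - z_k)) = C·Φ_k(η), where z_k = c a^{k+1}, w₁ = 1 - c|a|²a, c = 1/(1-|a|⁴). -/

import Mathlib

open Real Set

private lemma key_id (r c c1 s1 sk ck R : ℝ) (h1 : 2*r*c1 = 1) (h2 : c*(1-r^4) = 1)
    (h3 : s1^2 + c1^2 = 1) :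
    c*R*sk - c*(R*r)*(sk*c1+ck*s1) - c^2*(R*r^3)*(sk*c1-ck*s1) + c^2*(R*r^4)*sk
      + c^2*(R*R*r)*s1
    = c^2*(r*R)*((1-r^4)*(sk*c1-ck*s1)
        - r^3*(sk*(c1*c1-s1*s1)-ck*(2*s1*c1)) + R*s1) := by
  linear_combination ((-1/2)*c*sk*R - (1/2)*c^2*sk*R - r^3*c^2*s1*ck*R + r^3*c^2*c1*sk*R
      + (1/2)*r^4*c^2*sk*R) * h1
    + ((-1/2)*c*sk*R + r*c*s1*ck*R) * h2
    + (-(r^4)*c^2*sk*R) * h3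

theorem stmt9 (η : ℝ) (hη0 : 0 < η) (hη1 : η < π / 3)
    (a : ℂ) (ha : a = Complex.exp (-(η : ℂ) * Complex.I) / (2 * Real.cos η))
    (c : ℝ) (hc : c = 1 / (1 - ‖a‖ ^ 4))
    (z : ℕ → ℂ) (hz : ∀ k, z k = (c : ℂ) * a ^ (k + 1))
    (w₁ : ℂ) (hw₁ : w₁ = 1 - (c : ℂ) * (‖a‖ : ℂ) ^ 2 * a) :
    ∀ k : ℕ, 1 ≤ k → ∃ C : ℝ, 0 < C ∧
      (((starRingEnd ℂ) (z (k - 1)) - (starRingEnd ℂ) (z k)) * (w₁ - z k)).im =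
        C * ((1 - ‖a‖ ^ 4) * Real.sin (((k : ℝ) - 1) * η)
          - ‖a‖ ^ 3 * Real.sin (((k : ℝ) - 2) * η)
          + ‖a‖ ^ k * Real.sin η) := by
  have hπ := Real.pi_pos
  have hcos : 0 < Real.cos η := by
    apply Real.cos_pos_of_mem_Ioo
    constructor <;> [linarith; linarith]
  obtain ⟨r, hrdef⟩ : ∃ r : ℝ, r = 1 / (2 * Real.cos η) := ⟨_, rfl⟩
  have hrpos : 0 < r := by rw [hrdef]; positivity
  have h1 : 2 * r * Real.cos η = 1 := by
    rw [hrdef]; field_simp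
  have hcoshalf : 1/2 < Real.cos η := by
    have := Real.cos_lt_cos_of_nonneg_of_le_pi (le_of_lt hη0) (by linarith) hη1
    rwa [Real.cos_pi_div_three] at this
  have hr1 : r < 1 := by
    nlinarith [h1, hcoshalf, hrpos]
  have habs : ‖a‖ = r := by
    rw [ha, norm_div, Complex.norm_exp]
    have h0 : (-(η : ℂ) * Complex.I).re = 0 := by simp
    rw [h0, Real.exp_zero]
    rw [show ((2 : ℂ) * (Real.cos η : ℂ)) = ((2 * Real.cos η : ℝ) : ℂ) by push_cast; ring]
    rw [Complex.norm_real, Real.norm_eq_abs, abs_of_pos (by linarith), hrdef]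
  have ha2 : a = ((r : ℝ) : ℂ) * Complex.exp (((-η : ℝ) : ℂ) * Complex.I) := by
    rw [ha, hrdef]
    push_cast
    rw [div_eq_mul_inv]
    ring_nf
  have hpow : ∀ n : ℕ, a ^ n
      = (((r ^ n : ℝ)) : ℂ) * Complex.exp (((-(n * η) : ℝ) : ℂ) * Complex.I) := by
    intro n
    rw [ha2, mul_pow, ← Complex.exp_nat_mul]
    push_cast
    ring_nf
  have hconj : ∀ θ : ℝ, (starRingEnd ℂ) (Complex.exp ((θ : ℂ) * Complex.I))
      = Complex.exp (((-θ : ℝ) : ℂ) * Complex.I) := by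
    intro θ
    rw [← Complex.exp_conj]
    push_cast
    simp [map_mul, Complex.conj_ofReal, Complex.conj_I]
  have h4 : 0 < 1 - r ^ 4 := by
    have := pow_lt_one₀ hrpos.le hr1 (by norm_num : 4 ≠ 0)
    linarith
  have hc0 : 0 < c := by
    rw [hc, habs]; positivity
  have h2 : c * (1 - r ^ 4) = 1 := by
    rw [hc, habs]; field_simp
  intro k hk
  refine ⟨c ^ 2 * r ^ (k + 1), by positivity, ?_⟩
  have hk1 : k - 1 + 1 = k := Nat.succ_pred_eq_of_pos hk
  rw [hz (k - 1), hz k, hw₁, hk1, habs, hpow k, hpow (k + 1), ha2]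
  simp only [← Complex.ofReal_pow]
  simp only [map_mul, map_sub, map_one, Complex.conj_ofReal, hconj]
  simp only [Complex.mul_im, Complex.mul_re, Complex.sub_re, Complex.sub_im, Complex.add_re,
    Complex.add_im, Complex.one_re, Complex.one_im, Complex.ofReal_re, Complex.ofReal_im,
    Complex.exp_ofReal_mul_I_re, Complex.exp_ofReal_mul_I_im, neg_neg, Real.sin_neg,
    Real.cos_neg, mul_zero, zero_mul, sub_zero, zero_sub, add_zero, zero_add, mul_one,
    one_mul, neg_zero]
  push_cast
  rw [show ((k : ℝ) + 1) * η = (k : ℝ) * η + η by ring]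
  rw [Real.sin_add, Real.cos_add]
  rw [show ((k : ℝ) - 1) * η = (k : ℝ) * η - η by ring, Real.sin_sub]
  rw [show ((k : ℝ) - 2) * η = (k : ℝ) * η - (η + η) by ring, Real.sin_sub,
    Real.cos_add, Real.sin_add]
  rw [pow_succ]
  linear_combination key_id r c (Real.cos η) (Real.sin η) (Real.sin ((k : ℝ) * η))
    (Real.cos ((k : ℝ) * η)) (r ^ k) h1 h2 (Real.sin_sq_add_cos_sq η)
    + (c ^ 2 * r * r ^ (2 * k) * Real.sin η) * Real.sin_sq_add_cos_sq ((k : ℝ) * η)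
    + (c ^ 2 * r ^ 4 * r ^ k * Real.sin ((k : ℝ) * η)) * Real.sin_sq_add_cos_sq η
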